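/- Suppose P_1,…,P_n ∈ K⟨n⟩ are homogeneous of common degree s ≥ 1 (i.e. N P_j = s·P_j for all j) and Σ_{j=1}^n X_j P_j lies in the cyclic subspace CK⟨n⟩. Then δ_k(Σ_{j=1}^n X_j P_j) = (s+1)·P_k for every k with 1 ≤ k ≤ n. -/

import Mathlib

/-! Setup: the free associative algebra `K⟨X_1,…,X_n⟩` realized as the monoid
algebra of the free monoid on `Fin n`, together with the partial cyclic
derivatives `δ_j`, the number operator `N` and the cyclic symmetrization `C`. -/

noncomputable section

/-- `K⟨n⟩`, the ring of polynomials in `n` noncommuting indeterminates. -/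
abbrev FreePoly (K : Type) [CommSemiring K] (n : ℕ) : Type :=
  MonoidAlgebra K (FreeMonoid (Fin n))

/-- The monomial `X_{i_1} ⋯ X_{i_p}` associated to the word `w = [i_1,…,i_p]`. -/
def mono (K : Type) [Field K] {n : ℕ} (w : List (Fin n)) : FreePoly K n :=
  MonoidAlgebra.single (FreeMonoid.ofList w) 1

/-- The indeterminate `X k`. -/
def Xvar (K : Type) [Field K] {n : ℕ} (k : Fin n) : FreePoly K n := mono K [k]

variable {K : Type} [Field K] [CharZero K] {n : ℕ}

/-- The partial cyclic derivative `δ_j = μ̃ ∘ ∂_j`: on a monomial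
`X_{i_0} ⋯ X_{i_s}` it gives `∑_{p : i_p = j} X_{i_{p+1}} ⋯ X_{i_s} X_{i_0} ⋯ X_{i_{p-1}}`. -/
def cycDeriv (j : Fin n) : FreePoly K n →ₗ[K] FreePoly K n :=
  (Finsupp.lsum K fun w => LinearMap.toSpanSingleton K _
    (∑ p : Fin (FreeMonoid.toList w).length,
      if (FreeMonoid.toList w).get p = j then
        mono K ((FreeMonoid.toList w).drop (p + 1) ++ (FreeMonoid.toList w).take p)
      else 0)) ∘ₗ (MonoidAlgebra.coeffLinearEquiv K).toLinearMap

/-- The number operator `N`, multiplying a monomial by its degree. -/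
def numOp : FreePoly K n →ₗ[K] FreePoly K n :=
  (Finsupp.lsum K fun w => LinearMap.toSpanSingleton K _
    ((FreeMonoid.toList w).length • mono K (FreeMonoid.toList w))) ∘ₗ
    (MonoidAlgebra.coeffLinearEquiv K).toLinearMap

/-- The cyclic symmetrization `C`, sending a monomial of degree `p ≥ 1` to the
sum of its `p` cyclic rotations (and `1` to `0`). -/
def cycSym : FreePoly K n →ₗ[K] FreePoly K n :=
  (Finsupp.lsum K fun w => LinearMap.toSpanSingleton K _
    (∑ p ∈ Finset.range (FreeMonoid.toList w).length,
      mono K ((FreeMonoid.toList w).rotate (p + 1)))) ∘ₗ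
    (MonoidAlgebra.coeffLinearEquiv K).toLinearMap

/-! ### Auxiliary lemmas -/

set_option linter.unusedSectionVars false

lemma mono_mul (u v : List (Fin n)) : mono K u * mono K v = mono K (u ++ v) := by
  simp [mono, MonoidAlgebra.single_mul_single, FreeMonoid.ofList_append]

lemma X_mul_mono (j : Fin n) (t : List (Fin n)) :
    Xvar K j * mono K t = mono K (j :: t) := by
  rw [Xvar, mono_mul]
  rfl

lemma of_eq_mono (g : FreeMonoid (Fin n)) :
    (MonoidAlgebra.of K (FreeMonoid (Fin n))) g = mono K (FreeMonoid.toList g) := by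
  simp [mono, FreeMonoid.ofList_toList, MonoidAlgebra.of_apply]

lemma cycDeriv_mono (j : Fin n) (u : List (Fin n)) :
    cycDeriv j (mono K u) = ∑ p : Fin u.length,
      if u.get p = j then mono K (u.drop (p + 1) ++ u.take p) else 0 := by
  rw [mono, cycDeriv, LinearMap.comp_apply]
  erw [Finsupp.lsum_single, LinearMap.toSpanSingleton_apply, one_smul]
  rfl

lemma numOp_mono (u : List (Fin n)) : numOp (mono K u) = u.length • mono K u := by
  rw [mono, numOp, LinearMap.comp_apply]
  erw [Finsupp.lsum_single, LinearMap.toSpanSingleton_apply, one_smul]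
  rfl

lemma cycSym_mono (u : List (Fin n)) :
    cycSym (mono K u) = ∑ p ∈ Finset.range u.length, mono K (u.rotate (p + 1)) := by
  rw [mono, cycSym, LinearMap.comp_apply]
  erw [Finsupp.lsum_single, LinearMap.toSpanSingleton_apply, one_smul]
  rfl

/-- A sum over one period of a periodic function is shift invariant. -/
lemma sum_shift {M : Type*} [AddCommMonoid M] (f : ℕ → M) (l : ℕ)
    (hf : ∀ m, f m = f (m % l)) (r : ℕ) :
    ∑ p ∈ Finset.range l, f (p + r) = ∑ p ∈ Finset.range l, f p := by
  have h1 : ∀ g : ℕ → M, (∀ m, g m = g (m % l)) →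
      ∑ p ∈ Finset.range l, g (p + 1) = ∑ p ∈ Finset.range l, g p := by
    intro g hg
    cases l with
    | zero => simp
    | succ m =>
      rw [Finset.sum_range_succ, Finset.sum_range_succ']
      congr 1
      rw [hg (m + 1), Nat.mod_self]
  induction r with
  | zero => simp
  | succ r ih =>
    have e1 : ∑ p ∈ Finset.range l, f (p + (r + 1))
        = ∑ p ∈ Finset.range l, (fun q => f (q + r)) (p + 1) :=
      Finset.sum_congr rfl fun p _ => by simp only []; congr 1; omega
    have hper : ∀ m, (fun q => f (q + r)) m = (fun q => f (q + r)) (m % l) := by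
      intro m
      simp only []
      rw [hf (m + r), hf (m % l + r)]
      congr 1
      rw [Nat.add_mod m r l, Nat.add_mod (m % l) r l, Nat.mod_mod_of_dvd m dvd_rfl]
    rw [e1, h1 (fun q => f (q + r)) hper]
    exact ih

lemma sum_X_mul_cycDeriv_mono (u : List (Fin n)) :
    ∑ j : Fin n, Xvar K j * cycDeriv j (mono K u)
      = ∑ p ∈ Finset.range u.length, mono K (u.rotate p) := by
  have step : ∑ j : Fin n, Xvar K j * cycDeriv j (mono K u)
      = ∑ p : Fin u.length, mono K (u.rotate p) := by
    simp only [cycDeriv_mono, Finset.mul_sum, mul_ite, mul_zero]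
    rw [Finset.sum_comm]
    refine Finset.sum_congr rfl fun p _ => ?_
    rw [Finset.sum_ite_eq, if_pos (Finset.mem_univ _)]
    rw [X_mul_mono, List.rotate_eq_drop_append_take (le_of_lt p.2),
        List.drop_eq_getElem_cons p.2, List.get_eq_getElem, List.cons_append]
  rw [step, Fin.sum_univ_eq_sum_range (fun p => mono K (u.rotate p))]

lemma rot_periodic (u : List (Fin n)) (m : ℕ) :
    mono K (u.rotate m) = mono K (u.rotate (m % u.length)) := by
  rw [List.rotate_mod]

lemma sum_X_mul_cycDeriv_cycSym_mono (u : List (Fin n)) :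
    ∑ j : Fin n, Xvar K j * cycDeriv j (cycSym (mono K u))
      = numOp (cycSym (mono K u)) := by
  set l := u.length with hl
  rw [cycSym_mono]
  have hlr : ∀ m, (u.rotate m).length = l := fun m => by rw [List.length_rotate]
  have hsh : ∑ p ∈ Finset.range l, mono K (u.rotate (p + 1))
      = ∑ p ∈ Finset.range l, mono K (u.rotate p) :=
    sum_shift (fun m => mono K (u.rotate m)) l (rot_periodic u) 1
  calc ∑ j : Fin n, Xvar K j * cycDeriv j (∑ p ∈ Finset.range l, mono K (u.rotate (p + 1)))
      = ∑ p ∈ Finset.range l, ∑ j : Fin n, Xvar K j * cycDeriv j (mono K (u.rotate (p + 1))) := by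
        simp only [map_sum, Finset.mul_sum]
        exact Finset.sum_comm
    _ = ∑ p ∈ Finset.range l, ∑ q ∈ Finset.range l, mono K (u.rotate (q + (p + 1))) := by
        refine Finset.sum_congr rfl fun p _ => ?_
        rw [sum_X_mul_cycDeriv_mono, hlr]
        refine Finset.sum_congr rfl fun q _ => ?_
        rw [List.rotate_rotate]
        ring_nf
    _ = ∑ p ∈ Finset.range l, ∑ q ∈ Finset.range l, mono K (u.rotate q) := by
        refine Finset.sum_congr rfl fun p _ => ?_
        exact sum_shift (fun m => mono K (u.rotate m)) l (rot_periodic u) (p + 1)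
    _ = ∑ p ∈ Finset.range l, l • mono K (u.rotate (p + 1)) := by
        calc ∑ p ∈ Finset.range l, ∑ q ∈ Finset.range l, mono K (u.rotate q)
            = l • ∑ q ∈ Finset.range l, mono K (u.rotate q) := by
              rw [Finset.sum_const, Finset.card_range]
          _ = l • ∑ p ∈ Finset.range l, mono K (u.rotate (p + 1)) := by rw [hsh]
          _ = _ := Finset.smul_sum
    _ = numOp (∑ p ∈ Finset.range l, mono K (u.rotate (p + 1))) := by
        rw [map_sum]
        exact (Finset.sum_congr rfl fun p _ => by rw [numOp_mono, hlr]).symm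

lemma sum_X_mul_cycDeriv_cycSym (G : FreePoly K n) :
    ∑ j : Fin n, Xvar K j * cycDeriv j (cycSym G) = numOp (cycSym G) := by
  induction G using MonoidAlgebra.induction_on with
  | of g => rw [of_eq_mono]; exact sum_X_mul_cycDeriv_cycSym_mono _
  | add f g hf hg => simp only [map_add, mul_add, Finset.sum_add_distrib, hf, hg]
  | smul r f hf => simp only [map_smul, mul_smul_comm, ← Finset.smul_sum, hf]

/-- Extraction of the coefficient polynomial of `X_k`. -/
def hdExtr (k : Fin n) : List (Fin n) → FreePoly K n
  | [] => 0
  | j :: t => if j = k then mono K t else 0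

def extr (k : Fin n) : FreePoly K n →ₗ[K] FreePoly K n :=
  (Finsupp.lsum K fun w => LinearMap.toSpanSingleton K _ (hdExtr k (FreeMonoid.toList w))) ∘ₗ
    (MonoidAlgebra.coeffLinearEquiv K).toLinearMap

lemma extr_mono (k : Fin n) (u : List (Fin n)) :
    extr k (mono K u) = hdExtr k u := by
  rw [mono, extr, LinearMap.comp_apply]
  erw [Finsupp.lsum_single, LinearMap.toSpanSingleton_apply, one_smul]
  rfl

lemma extr_X_mul (k j : Fin n) (Q : FreePoly K n) :
    extr k (Xvar K j * Q) = if j = k then Q else 0 := by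
  induction Q using MonoidAlgebra.induction_on with
  | of g =>
      rw [of_eq_mono, X_mul_mono, extr_mono]
      rfl
  | add f g hf hg =>
      rw [mul_add, map_add, hf, hg]
      split <;> simp
  | smul r f hf =>
      rw [mul_smul_comm, map_smul, hf]
      split <;> simp

lemma numOp_X_mul (j : Fin n) (Q : FreePoly K n) :
    numOp (Xvar K j * Q) = Xvar K j * numOp Q + Xvar K j * Q := by
  induction Q using MonoidAlgebra.induction_on with
  | of g =>
      rw [of_eq_mono, X_mul_mono, numOp_mono, numOp_mono, mul_smul_comm, X_mul_mono,
          List.length_cons, succ_nsmul]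
  | add f g hf hg =>
      simp only [mul_add, map_add, hf, hg]
      abel
  | smul r f hf =>
      simp only [mul_smul_comm, map_smul, hf, smul_add]

theorem cycDeriv_eq_smul_of_homogeneous (P : Fin n → FreePoly K n) (s : ℕ) (hs : 1 ≤ s)
    (hhom : ∀ j : Fin n, numOp (P j) = s • P j)
    (h : (∑ j : Fin n, Xvar K j * P j) ∈ LinearMap.range (cycSym (K := K) (n := n))) :
    ∀ k : Fin n, cycDeriv k (∑ j : Fin n, Xvar K j * P j) = (s + 1) • P k := by
  intro k
  obtain ⟨G, hG⟩ := h
  set F := ∑ j : Fin n, Xvar K j * P j with hF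
  have key : ∑ j : Fin n, Xvar K j * cycDeriv j F = numOp F := by
    rw [← hG]; exact sum_X_mul_cycDeriv_cycSym G
  have hN : numOp F = ∑ j : Fin n, Xvar K j * ((s + 1) • P j) := by
    rw [hF, map_sum]
    refine Finset.sum_congr rfl fun j _ => ?_
    rw [numOp_X_mul, hhom j, succ_nsmul]
    simp only [mul_add, mul_smul_comm]
  have := congrArg (extr k) (key.trans hN)
  rw [map_sum, map_sum] at this
  simp only [extr_X_mul] at this
  rw [Finset.sum_ite_eq', if_pos (Finset.mem_univ k),
      Finset.sum_ite_eq', if_pos (Finset.mem_univ k)] at this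
  exact this
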